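/- Let h : ℝ^n → ℝ be strictly convex and differentiable, K ⊆ ℝ^n convex, and D_h(y‖x) = h(y) - h(x) - ⟨∇h(x), y-x⟩ the Bregman divergence. If b = argmin_{x∈K} D_h(x‖b') is the Bregman projection of b' onto K and a ∈ K, then ⟨∇h(b') - ∇h(b), a - b⟩ ≤ 0, and consequently D_h(a‖b') ≥ D_h(a‖b) + D_h(b‖b'), hence D_h(a‖b) ≤ D_h(a‖b'). -/

import Mathlib

open RealInnerProductSpace

/-- Generalized Pythagorean property of Bregman projections. -/
theorem bregman_projection_pythagorean {n : ℕ}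
    (h : EuclideanSpace ℝ (Fin n) → ℝ)
    (h' : EuclideanSpace ℝ (Fin n) → EuclideanSpace ℝ (Fin n))
    (hstrict : StrictConvexOn ℝ Set.univ h)
    (hdiff : ∀ x, HasGradientAt h (h' x) x)
    (K : Set (EuclideanSpace ℝ (Fin n))) (hKconv : Convex ℝ K)
    (Dh : EuclideanSpace ℝ (Fin n) → EuclideanSpace ℝ (Fin n) → ℝ)
    (hDh : ∀ y x, Dh y x = h y - h x - ⟪h' x, y - x⟫)
    (a b b' : EuclideanSpace ℝ (Fin n)) (ha : a ∈ K) (hb : b ∈ K)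
    (hproj : ∀ x ∈ K, Dh b b' ≤ Dh x b') :
    ⟪h' b' - h' b, a - b⟫ ≤ 0 ∧
    Dh a b' ≥ Dh a b + Dh b b' ∧
    Dh a b ≤ Dh a b' := by
  -- Define f x = Dh x b'
  set f : EuclideanSpace ℝ (Fin n) → ℝ := fun x => Dh x b' with hf
  -- f has Fréchet derivative innerSL (h' b) - innerSL (h' b') at b
  have hfd : HasFDerivAt f ((InnerProductSpace.toDual ℝ _ (h' b)) -
      (InnerProductSpace.toDual ℝ _ (h' b'))) b := by
    have h1 : HasFDerivAt h (InnerProductSpace.toDual ℝ _ (h' b)) b :=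
      (hdiff b).hasFDerivAt
    have h2 : HasFDerivAt (fun x => ⟪h' b', x - b'⟫ + h b')
        (InnerProductSpace.toDual ℝ _ (h' b')) b := by
      have hinner : ∀ p, HasFDerivAt (fun x : EuclideanSpace ℝ (Fin n) => ⟪h' b', x⟫)
          (InnerProductSpace.toDual ℝ _ (h' b')) p := fun p => by
        exact (InnerProductSpace.toDual ℝ (EuclideanSpace ℝ (Fin n))
          (h' b')).hasFDerivAt (x := p)
      have := ((hinner _).comp b ((hasFDerivAt_id b).sub_const b')).add_const (h b')
      convert this using 2 with x
      iterate 4 rfl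
      exact (ContinuousLinearMap.comp_id _).symm
    have := h1.sub h2
    convert this using 2 with x
    iterate 3 rfl
    funext x
    rw [hf]
    simp only [hDh, Pi.sub_apply]
    ring
  have hmin : IsMinOn f K b := fun x hx => hproj x hx
  have hcone : a - b ∈ posTangentConeAt K b :=
    sub_mem_posTangentConeAt_of_segment_subset (hKconv.segment_subset hb ha)
  have hvar : (0:ℝ) ≤ (InnerProductSpace.toDual ℝ _ (h' b) -
      InnerProductSpace.toDual ℝ _ (h' b')) (a - b) :=
    (hmin.localize.hasFDerivWithinAt_nonneg hfd.hasFDerivWithinAt hcone)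
  have key : ⟪h' b' - h' b, a - b⟫ ≤ 0 := by
    simp only [ContinuousLinearMap.sub_apply, InnerProductSpace.toDual_apply_apply] at hvar
    rw [inner_sub_left]
    linarith
  refine ⟨key, ?_, ?_⟩
  · have : Dh a b' - (Dh a b + Dh b b') = -⟪h' b' - h' b, a - b⟫ := by
      simp only [hDh, inner_sub_left, inner_sub_right]
      ring
    linarith [key, this]
  · have hbb : 0 ≤ Dh b b' := by
      rw [hDh]
      -- gradient inequality for convex h: ⟪h' b', b - b'⟫ ≤ h b - h b'
      set g : ℝ → ℝ := fun t => h (b' + t • (b - b')) with hg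
      have hgconv : ConvexOn ℝ Set.univ g := by
        have := hstrict.convexOn.comp_affineMap
          (AffineMap.lineMap b' b : ℝ →ᵃ[ℝ] EuclideanSpace ℝ (Fin n))
        convert this.subset (Set.subset_univ _) convex_univ using 1
        iterate 4 rfl
        ext t
        simp [hg, AffineMap.lineMap_apply]
        ext t
        simp [hg, AffineMap.lineMap_apply]
        abel_nf
      have hcurve : HasDerivAt (fun t : ℝ => b' + t • (b - b')) (b - b') 0 := by
        simpa using ((hasDerivAt_id (0:ℝ)).smul_const (b - b')).const_add b'
      have hgd : HasDerivAt g ⟪h' b', b - b'⟫ 0 := by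
        have hh : HasFDerivAt h (InnerProductSpace.toDual ℝ _ (h' b'))
            (b' + (0:ℝ) • (b - b')) := by simpa using (hdiff b').hasFDerivAt
        have := hh.comp_hasDerivAt 0 hcurve
        exact this
      have hle := hgconv.le_slope_of_hasDerivAt (Set.mem_univ 0) (Set.mem_univ 1)
        one_pos hgd
      have hslope : slope g 0 1 = h b - h b' := by
        rw [slope_def_field]
        simp [hg]
      rw [hslope] at hle
      linarith
    have h2 : Dh a b' - (Dh a b + Dh b b') = -⟪h' b' - h' b, a - b⟫ := by
      simp only [hDh, inner_sub_left, inner_sub_right]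
      ring
    linarith
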